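/- If moreover M₁₁ and M₂₂ are symmetric (so that M is symmetric), then Xᵀ M⁻¹ = [0 | M₂₂⁻¹] as a q×(p+q) block matrix; in particular, for every vector l ∈ ℝ^(p+q) one has Xᵀ (M⁻¹ l) = M₂₂⁻¹ l_β, where l_β ∈ ℝ^q denotes the last q components of l, and Xᵀ G = 0 where G is the (p+q)×p matrix of the first p columns of M⁻¹. -/

import Mathlib

open Matrix

/-- If moreover M₁₁ and M₂₂ are symmetric (so that M is symmetric), then
Xᵀ M⁻¹ = [0 | M₂₂⁻¹] as a q×(p+q) block matrix; in particular, for every vector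
l ∈ ℝ^(p+q) one has Xᵀ (M⁻¹ l) = M₂₂⁻¹ l_β where l_β denotes the last q components of l,
and Xᵀ G = 0 where G is the (p+q)×p matrix of the first p columns of M⁻¹. -/
theorem stmt_7 {p q : ℕ}
    (M₁₁ : Matrix (Fin p) (Fin p) ℝ) (M₁₂ : Matrix (Fin p) (Fin q) ℝ)
    (M₂₂ : Matrix (Fin q) (Fin q) ℝ)
    (M : Matrix (Fin p ⊕ Fin q) (Fin p ⊕ Fin q) ℝ)
    (hM : M = Matrix.fromBlocks M₁₁ M₁₂ M₁₂ᵀ M₂₂)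
    (hMinv : IsUnit M) (hM₂₂inv : IsUnit M₂₂)
    (hM₁₁sym : M₁₁ᵀ = M₁₁) (hM₂₂sym : M₂₂ᵀ = M₂₂)
    (N : Matrix (Fin p) (Fin q) ℝ) (hN : N = M₁₂ * M₂₂⁻¹)
    (X : Matrix (Fin p ⊕ Fin q) (Fin q) ℝ) (hX : X = Matrix.fromRows N 1)
    (G : Matrix (Fin p ⊕ Fin q) (Fin p) ℝ)
    (hG : G = M⁻¹ * Matrix.fromRows (1 : Matrix (Fin p) (Fin p) ℝ) (0 : Matrix (Fin q) (Fin p) ℝ)) :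
    Xᵀ * M⁻¹ = Matrix.fromCols (0 : Matrix (Fin q) (Fin p) ℝ) M₂₂⁻¹ ∧
      (∀ l : Fin p ⊕ Fin q → ℝ,
        Xᵀ.mulVec (M⁻¹.mulVec l) = M₂₂⁻¹.mulVec (fun j => l (Sum.inr j))) ∧
      Xᵀ * G = 0 := by
  have hM₂₂invsym : M₂₂⁻¹ᵀ = M₂₂⁻¹ := by
    rw [Matrix.transpose_nonsing_inv, hM₂₂sym]
  have hXT : Xᵀ = Matrix.fromCols Nᵀ 1 := by
    rw [hX, Matrix.transpose_fromRows, Matrix.transpose_one]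
  have key : Xᵀ = Matrix.fromCols (0 : Matrix (Fin q) (Fin p) ℝ) M₂₂⁻¹ * M := by
    rw [hXT, hM, Matrix.fromCols_mul_fromBlocks]
    simp [hN, Matrix.transpose_mul, hM₂₂invsym,
      Matrix.nonsing_inv_mul _ ((Matrix.isUnit_iff_isUnit_det _).mp hM₂₂inv)]
  have h1 : Xᵀ * M⁻¹ = Matrix.fromCols (0 : Matrix (Fin q) (Fin p) ℝ) M₂₂⁻¹ := by
    rw [key, Matrix.mul_assoc,
      Matrix.mul_nonsing_inv _ ((Matrix.isUnit_iff_isUnit_det _).mp hMinv), Matrix.mul_one]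
  refine ⟨h1, fun l => ?_, ?_⟩
  · rw [Matrix.mulVec_mulVec, h1]
    ext i
    simp [Matrix.mulVec, dotProduct, Fintype.sum_sum_type, Matrix.fromCols]
  · rw [hG, ← Matrix.mul_assoc, h1, Matrix.fromCols_mul_fromRows]
    simp
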